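/- arXiv:1508.03979 — 8 statements merged into one kernel-verified Lean document; each statement's English description precedes it below -/
import Mathlib

section
/- Let a, b, c, d be points in the Euclidean plane ℝ² with b ≠ d, such that a and c lie strictly on opposite sides of the line through b and d. Let a', b', c', d' be points in ℝ² such that dist a' b' = dist a b, dist b' c' = dist b c, dist a' c' = dist a d + dist d c, d' lies on the segment [a', c'], and dist a' d' = dist a d. Then ∠ a d b + ∠ b d c < π if and only if dist b' d' < dist b d; moreover, in this case one also has ∠ b' a' d' < ∠ b a d and ∠ b' c' d' < ∠ b c d. -/
open EuclideanGeometry Real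

private lemma cos_lt_cos_of_angle_lt {x y : ℝ} (hx0 : 0 ≤ x) (hy : y ≤ π)
    (hxy : x < y) : Real.cos y < Real.cos x :=
  Real.strictAntiOn_cos ⟨hx0, le_of_lt (lt_of_lt_of_le hxy hy)⟩
    ⟨le_trans hx0 hxy.le, hy⟩ hxy

/-- Aleksandrov's Lemma (strict `<` case). -/
theorem aleksandrov_lemma_lt
    (a b c d a' b' c' d' : EuclideanSpace ℝ (Fin 2))
    (hbd : b ≠ d)
    (hopp : (affineSpan ℝ ({b, d} : Set (EuclideanSpace ℝ (Fin 2)))).SOppSide a c)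
    (h1 : dist a' b' = dist a b)
    (h2 : dist b' c' = dist b c)
    (h3 : dist a' c' = dist a d + dist d c)
    (h4 : d' ∈ segment ℝ a' c')
    (h5 : dist a' d' = dist a d) :
    (∠ a d b + ∠ b d c < Real.pi ↔ dist b' d' < dist b d) ∧
      (∠ a d b + ∠ b d c < Real.pi →
        ∠ b' a' d' < ∠ b a d ∧ ∠ b' c' d' < ∠ b c d) := by
  have hdmem : d ∈ affineSpan ℝ ({b, d} : Set (EuclideanSpace ℝ (Fin 2))) :=
    subset_affineSpan ℝ _ (by simp)
  have hbmem : b ∈ affineSpan ℝ ({b, d} : Set (EuclideanSpace ℝ (Fin 2))) :=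
    subset_affineSpan ℝ _ (by simp)
  have ha : a ∉ affineSpan ℝ ({b, d} : Set (EuclideanSpace ℝ (Fin 2))) := hopp.2.1
  have hc : c ∉ affineSpan ℝ ({b, d} : Set (EuclideanSpace ℝ (Fin 2))) := hopp.2.2
  have had : a ≠ d := fun h => ha (h ▸ hdmem)
  have hab : a ≠ b := fun h => ha (h ▸ hbmem)
  have hcd : c ≠ d := fun h => hc (h ▸ hdmem)
  have hcb : c ≠ b := fun h => hc (h ▸ hbmem)
  have hp : 0 < dist a d := dist_pos.2 had
  have hq : 0 < dist d c := dist_pos.2 (Ne.symm hcd)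
  have hr : 0 < dist b d := dist_pos.2 hbd
  -- distances in the primed configuration
  have hsum : dist a' d' + dist d' c' = dist a' c' := dist_add_dist_of_mem_segment h4
  have hdc' : dist d' c' = dist d c := by rw [h3, h5] at hsum; linarith
  have hd'a' : d' ≠ a' := by
    intro h; rw [h, dist_self] at h5; exact absurd h5.symm (ne_of_gt hp)
  have hd'c' : d' ≠ c' := by
    intro h; rw [h, dist_self] at hdc'; exact absurd hdc'.symm (ne_of_gt hq)
  have hs : Sbtw ℝ a' d' c' := ⟨mem_segment_iff_wbtw.1 h4, hd'a', hd'c'⟩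
  have hpi : ∠ a' d' c' = π := hs.angle₁₂₃_eq_pi
  have hang : ∠ b' d' a' + ∠ b' d' c' = π := angle_add_angle_eq_pi_of_angle_eq_pi b' hpi
  have hcos' : Real.cos (∠ b' d' c') = - Real.cos (∠ a' d' b') := by
    have h6 : ∠ b' d' c' = π - ∠ b' d' a' := by linarith
    rw [h6, Real.cos_pi_sub, angle_comm]
  -- law of cosines at the vertices d, d', a, a', c, c'
  have LC1 := EuclideanGeometry.law_cos a d b
  have LC2 := EuclideanGeometry.law_cos b d c
  have LC1' := EuclideanGeometry.law_cos a' d' b'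
  have LC2' := EuclideanGeometry.law_cos b' d' c'
  have A := EuclideanGeometry.law_cos b a d
  have A' := EuclideanGeometry.law_cos b' a' d'
  have C := EuclideanGeometry.law_cos b c d
  have C' := EuclideanGeometry.law_cos b' c' d'
  rw [h1, h5] at LC1'
  rw [dist_comm c d] at LC2
  rw [h2, (dist_comm c' d').trans hdc', hcos'] at LC2'
  rw [dist_comm b a, dist_comm d a] at A
  rw [dist_comm b' a', h1, dist_comm d' a', h5] at A'
  rw [h2, hdc'] at C'
  have hba : 0 < dist a b := dist_pos.2 hab
  have hbc : 0 < dist b c := dist_pos.2 (fun h => hcb h.symm)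
  -- abstract all distances as real numbers
  set p := dist a d with hpdef
  set q := dist d c with hqdef
  set r := dist b d with hrdef
  set r' := dist b' d' with hr'def
  have hrr0 : 0 ≤ r' := dist_nonneg
  set s := dist a b with hsdef
  set t := dist b c with htdef
  clear_value p q r r' s t
  have hpq : 0 < p + q := by linarith
  -- key identity: (p+q)(r² - r'²) = 2pqr(cos α + cos β)
  have key : (p + q) * (r * r - r' * r')
      = 2 * p * q * r * (Real.cos (∠ a d b) + Real.cos (∠ b d c)) := by
    linear_combination q * LC1' - q * LC1 + p * LC2' - p * LC2
  -- sign of cos α + cos β versus the angle sum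
  have hiff1 : ∠ a d b + ∠ b d c < π ↔
      0 < Real.cos (∠ a d b) + Real.cos (∠ b d c) := by
    constructor
    · intro h
      have h1' : ∠ b d c < π - ∠ a d b := by linarith
      have := cos_lt_cos_of_angle_lt (angle_nonneg b d c)
        (by linarith [angle_nonneg a d b]) h1'
      rw [Real.cos_pi_sub] at this
      linarith
    · intro h
      by_contra hle
      push_neg at hle
      have h1' : π - ∠ a d b ≤ ∠ b d c := by linarith
      have := Real.strictAntiOn_cos.antitoneOn
        ⟨by linarith [angle_le_pi a d b], by linarith [angle_nonneg a d b]⟩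
        ⟨angle_nonneg b d c, angle_le_pi b d c⟩ h1'
      rw [Real.cos_pi_sub] at this
      linarith
  have hiff2 : ∠ a d b + ∠ b d c < π ↔ r' < r := by
    rw [hiff1]
    constructor
    · intro h
      have h2' : 0 < (p + q) * (r * r - r' * r') := by
        rw [key]
        exact mul_pos (by positivity) h
      have h3' : r' * r' < r * r := by
        by_contra hle
        push_neg at hle
        have : (p + q) * (r * r - r' * r') ≤ 0 :=
          mul_nonpos_of_nonneg_of_nonpos hpq.le (by linarith)
        linarith
      by_contra hle
      push_neg at hle
      have : r * r ≤ r' * r' := mul_le_mul hle hle hr.le hrr0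
      linarith
    · intro h
      have h3' : r' * r' < r * r := by
        have := mul_le_mul h.le h.le hrr0 (by linarith : (0:ℝ) ≤ r)
        linarith [mul_self_lt_mul_self hrr0 h]
      have h2' : 0 < (p + q) * (r * r - r' * r') := mul_pos hpq (by linarith)
      rw [key] at h2'
      by_contra hle
      push_neg at hle
      have : 2 * p * q * r * (Real.cos (∠ a d b) + Real.cos (∠ b d c)) ≤ 0 :=
        mul_nonpos_of_nonneg_of_nonpos (by positivity) hle
      linarith
  refine ⟨hiff2, fun h => ?_⟩
  have hlt : r' < r := hiff2.1 h
  have hsq : r' * r' < r * r := mul_self_lt_mul_self hrr0 hlt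
  constructor
  · -- angle at a
    have hcoslt : Real.cos (∠ b a d) < Real.cos (∠ b' a' d') := by
      have h7 : 2 * s * p * (Real.cos (∠ b' a' d') - Real.cos (∠ b a d))
          = r * r - r' * r' := by linarith
      by_contra hle
      push_neg at hle
      have : 2 * s * p * (Real.cos (∠ b' a' d') - Real.cos (∠ b a d)) ≤ 0 :=
        mul_nonpos_of_nonneg_of_nonpos (by positivity) (by linarith)
      linarith
    by_contra hle
    push_neg at hle
    rcases eq_or_lt_of_le hle with heq | hlt2
    · rw [heq] at hcoslt; linarith
    · have := cos_lt_cos_of_angle_lt (angle_nonneg b a d) (angle_le_pi b' a' d') hlt2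
      linarith
  · -- angle at c
    have hcoslt : Real.cos (∠ b c d) < Real.cos (∠ b' c' d') := by
      have h7 : 2 * t * q * (Real.cos (∠ b' c' d') - Real.cos (∠ b c d))
          = r * r - r' * r' := by linarith
      by_contra hle
      push_neg at hle
      have : 2 * t * q * (Real.cos (∠ b' c' d') - Real.cos (∠ b c d)) ≤ 0 :=
        mul_nonpos_of_nonneg_of_nonpos (by positivity) (by linarith)
      linarith
    by_contra hle
    push_neg at hle
    rcases eq_or_lt_of_le hle with heq | hlt2
    · rw [heq] at hcoslt; linarith
    · have := cos_lt_cos_of_angle_lt (angle_nonneg b c d) (angle_le_pi b' c' d') hlt2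
      linarith
end

section
/- Let a, b, c, d be points in the Euclidean plane ℝ² with b ≠ d, such that a and c lie strictly on opposite sides of the line through b and d. Let a', b', c', d' be points in ℝ² such that dist a' b' = dist a b, dist b' c' = dist b c, dist a' c' = dist a d + dist d c, d' lies on the segment [a', c'], and dist a' d' = dist a d. Then ∠ a d b + ∠ b d c > π if and only if dist b' d' > dist b d; moreover, in this case one also has ∠ b' a' d' > ∠ b a d and ∠ b' c' d' > ∠ b c d. -/
open EuclideanGeometry Real

/-- Key identity in the straightened configuration. -/
lemma aleksandrov_key {E : Type*} [NormedAddCommGroup E] [InnerProductSpace ℝ E]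
    (a' b' c' d' : E) (h4 : d' ∈ segment ℝ a' c') (ha : a' ≠ d') (hc : d' ≠ c') :
    dist d' c' * (dist a' b' * dist a' b') + dist a' d' * (dist b' c' * dist b' c') =
      dist a' d' * dist d' c' * (dist a' d' + dist d' c') +
        (dist a' d' + dist d' c') * (dist b' d' * dist b' d') := by
  by_cases hbd' : b' = d'
  · subst hbd'
    rw [dist_comm a' b', dist_self]
    ring
  · have hsbtw : Sbtw ℝ a' d' c' := ⟨mem_segment_iff_wbtw.1 h4, Ne.symm ha, hc⟩
    have hπ : ∠ a' d' c' = π := angle_eq_pi_iff_sbtw.2 hsbtw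
    have hang : ∠ b' d' a' + ∠ b' d' c' = π := angle_add_angle_eq_pi_of_angle_eq_pi b' hπ
    have ecos : Real.cos (∠ b' d' c') = - Real.cos (∠ a' d' b') := by
      have h : ∠ b' d' c' = π - ∠ b' d' a' := by linarith
      rw [h, Real.cos_pi_sub, angle_comm b' d' a']
    have e1 := EuclideanGeometry.law_cos a' d' b'
    have e2 := EuclideanGeometry.law_cos b' d' c'
    rw [ecos, dist_comm c' d'] at e2
    linear_combination dist d' c' * e1 + dist a' d' * e2

set_option maxHeartbeats 1000000 in
/-- Aleksandrov's Lemma (strict `>` case). -/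
theorem aleksandrov_lemma_gt
    (a b c d a' b' c' d' : EuclideanSpace ℝ (Fin 2))
    (hbd : b ≠ d)
    (hopp : (affineSpan ℝ ({b, d} : Set (EuclideanSpace ℝ (Fin 2)))).SOppSide a c)
    (h1 : dist a' b' = dist a b)
    (h2 : dist b' c' = dist b c)
    (h3 : dist a' c' = dist a d + dist d c)
    (h4 : d' ∈ segment ℝ a' c')
    (h5 : dist a' d' = dist a d) :
    (∠ a d b + ∠ b d c > Real.pi ↔ dist b' d' > dist b d) ∧
      (∠ a d b + ∠ b d c > Real.pi →
        ∠ b' a' d' > ∠ b a d ∧ ∠ b' c' d' > ∠ b c d) := by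
  have hd_mem : d ∈ affineSpan ℝ ({b, d} : Set (EuclideanSpace ℝ (Fin 2))) :=
    mem_affineSpan ℝ (by simp)
  have hb_mem : b ∈ affineSpan ℝ ({b, d} : Set (EuclideanSpace ℝ (Fin 2))) :=
    mem_affineSpan ℝ (by simp)
  have had : a ≠ d := fun h => hopp.2.1 (h ▸ hd_mem)
  have hcd : c ≠ d := fun h => hopp.2.2 (h ▸ hd_mem)
  have hab : a ≠ b := fun h => hopp.2.1 (h ▸ hb_mem)
  have hcb : c ≠ b := fun h => hopp.2.2 (h ▸ hb_mem)
  have hp : (0:ℝ) < dist a d := dist_pos.2 had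
  have hq : (0:ℝ) < dist d c := dist_pos.2 (Ne.symm hcd)
  have hr : (0:ℝ) < dist b d := dist_pos.2 hbd
  have hu : (0:ℝ) < dist a b := dist_pos.2 hab
  have hv : (0:ℝ) < dist b c := dist_pos.2 (Ne.symm hcb)
  have hr' : (0:ℝ) ≤ dist b' d' := dist_nonneg
  have hpq : (0:ℝ) < dist a d + dist d c := by linarith
  -- distances in the primed configuration
  have hsum : dist a' d' + dist d' c' = dist a' c' := dist_add_dist_of_mem_segment h4
  have h6 : dist d' c' = dist d c := by rw [h5, h3] at hsum; linarith
  have ha'd' : a' ≠ d' := by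
    intro h; rw [h, dist_self] at h5; exact absurd h5.symm (ne_of_gt hp)
  have hd'c' : d' ≠ c' := by
    intro h; rw [h, dist_self] at h6; exact absurd h6.symm (ne_of_gt hq)
  -- the key identity
  have key := aleksandrov_key a' b' c' d' h4 ha'd' hd'c'
  rw [h1, h2, h5, h6] at key
  -- law of cosines in the original configuration, at vertex d
  have e1 := EuclideanGeometry.law_cos a d b
  have e2 := EuclideanGeometry.law_cos b d c
  rw [dist_comm c d] at e2
  -- combined identity
  have E : (dist a d + dist d c) * (dist b' d' * dist b' d' - dist b d * dist b d) =
      - 2 * dist a d * dist d c * dist b d *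
        (Real.cos (∠ a d b) + Real.cos (∠ b d c)) := by
    linear_combination dist d c * e1 + dist a d * e2 - key
  -- the cosine criterion
  have hcos : Real.cos (∠ a d b) + Real.cos (∠ b d c) < 0 ↔ ∠ a d b + ∠ b d c > Real.pi := by
    have hα : ∠ a d b ∈ Set.Icc 0 π := ⟨angle_nonneg _ _ _, angle_le_pi _ _ _⟩
    have hβ : π - ∠ b d c ∈ Set.Icc 0 π := by
      constructor
      · linarith [angle_le_pi b d c]
      · linarith [angle_nonneg b d c]
    have hmono := Real.strictAntiOn_cos.lt_iff_gt hα hβ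
    rw [Real.cos_pi_sub] at hmono
    constructor
    · intro h
      have := hmono.1 (by linarith)
      linarith
    · intro h
      have := hmono.2 (by linarith)
      linarith
  have hiff : ∠ a d b + ∠ b d c > Real.pi ↔ dist b' d' > dist b d := by
    rw [← hcos]
    constructor
    · intro h
      have t3 : (0:ℝ) < dist a d * dist d c * dist b d *
          (-(Real.cos (∠ a d b) + Real.cos (∠ b d c))) :=
        mul_pos (mul_pos (mul_pos hp hq) hr) (by linarith)
      have hΔ : dist b d * dist b d < dist b' d' * dist b' d' := by
        by_contra hcon
        push_neg at hcon
        have t4 : (0:ℝ) ≤ (dist a d + dist d c) *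
            (dist b d * dist b d - dist b' d' * dist b' d') :=
          mul_nonneg hpq.le (by linarith)
        nlinarith [E]
      by_contra hcon
      push_neg at hcon
      have t5 : (0:ℝ) ≤ (dist b d - dist b' d') * (dist b d + dist b' d') :=
        mul_nonneg (by linarith) (by linarith)
      nlinarith
    · intro h
      by_contra hS
      push_neg at hS
      have t1 : (0:ℝ) < (dist b' d' - dist b d) * (dist b' d' + dist b d) :=
        mul_pos (by linarith) (by linarith)
      have t2 : (0:ℝ) < (dist a d + dist d c) *
          ((dist b' d' * dist b' d' - dist b d * dist b d)) :=
        mul_pos hpq (by nlinarith)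
      have t3 : (0:ℝ) ≤ dist a d * dist d c * dist b d *
          (Real.cos (∠ a d b) + Real.cos (∠ b d c)) :=
        mul_nonneg (mul_pos (mul_pos hp hq) hr).le hS
      nlinarith [E]
  refine ⟨hiff, fun hgt => ?_⟩
  have hrgt : dist b d < dist b' d' := hiff.1 hgt
  have hsq : dist b d * dist b d < dist b' d' * dist b' d' := by nlinarith
  constructor
  · -- angle at a
    have f1 := EuclideanGeometry.law_cos b a d
    have f2 := EuclideanGeometry.law_cos b' a' d'
    rw [dist_comm b a, dist_comm d a] at f1
    rw [dist_comm b' a', dist_comm d' a', h1, h5] at f2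
    have hclt : Real.cos (∠ b' a' d') < Real.cos (∠ b a d) := by
      by_contra hcon
      push_neg at hcon
      have t : (0:ℝ) ≤ 2 * (dist a b * dist a d) *
          (Real.cos (∠ b' a' d') - Real.cos (∠ b a d)) :=
        mul_nonneg (by positivity) (by linarith)
      nlinarith [f1, f2]
    exact (Real.strictAntiOn_cos.lt_iff_gt
      ⟨angle_nonneg _ _ _, angle_le_pi _ _ _⟩
      ⟨angle_nonneg _ _ _, angle_le_pi _ _ _⟩).1 hclt
  · -- angle at c
    have f1 := EuclideanGeometry.law_cos b c d
    have f2 := EuclideanGeometry.law_cos b' c' d'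
    rw [h2, h6] at f2
    have hclt : Real.cos (∠ b' c' d') < Real.cos (∠ b c d) := by
      by_contra hcon
      push_neg at hcon
      have t : (0:ℝ) ≤ 2 * (dist b c * dist d c) *
          (Real.cos (∠ b' c' d') - Real.cos (∠ b c d)) :=
        mul_nonneg (by positivity) (by linarith)
      nlinarith [f1, f2]
    exact (Real.strictAntiOn_cos.lt_iff_gt
      ⟨angle_nonneg _ _ _, angle_le_pi _ _ _⟩
      ⟨angle_nonneg _ _ _, angle_le_pi _ _ _⟩).1 hclt
end

section
/- Let a, b, c, d be points in the Euclidean plane ℝ² with b ≠ d, such that a and c lie strictly on opposite sides of the line through b and d. Let a', b', c', d' be points in ℝ² such that dist a' b' = dist a b, dist b' c' = dist b c, dist a' c' = dist a d + dist d c, d' lies on the segment [a', c'], and dist a' d' = dist a d. Then ∠ a d b + ∠ b d c = π if and only if dist b' d' = dist b d; moreover, in this case one also has ∠ b' a' d' = ∠ b a d and ∠ b' c' d' = ∠ b c d. -/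
open EuclideanGeometry Real

noncomputable instance : Module.Oriented ℝ (EuclideanSpace ℝ (Fin 2)) (Fin 2) :=
  ⟨((EuclideanSpace.basisFun (Fin 2) ℝ).toBasis).orientation⟩

instance : Fact (Module.finrank ℝ (EuclideanSpace ℝ (Fin 2)) = 2) :=
  ⟨finrank_euclideanSpace_fin⟩

theorem aux_key (a b c d : EuclideanSpace ℝ (Fin 2)) (hbd : b ≠ d)
    (hopp : (affineSpan ℝ ({b, d} : Set (EuclideanSpace ℝ (Fin 2)))).SOppSide a c)
    (hsum : ∠ a d b + ∠ b d c = Real.pi) : ∠ a d c = Real.pi := by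
  set L := affineSpan ℝ ({b, d} : Set (EuclideanSpace ℝ (Fin 2))) with hL
  have hbL : b ∈ L := mem_affineSpan ℝ (by simp)
  have hdL : d ∈ L := mem_affineSpan ℝ (by simp)
  have haL : a ∉ L := hopp.left_notMem
  have hcL : c ∉ L := hopp.right_notMem
  have had : a ≠ d := fun h => haL (h ▸ hdL)
  have hcd : c ≠ d := fun h => hcL (h ▸ hdL)
  have hp : 0 < dist a d := dist_pos.2 had
  have hq : 0 < dist d c := dist_pos.2 (Ne.symm hcd)
  set r : ℝ := dist d c / dist a d with hr
  have hrpos : 0 < r := div_pos hq hp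
  set c₂ : EuclideanSpace ℝ (Fin 2) := r • (d -ᵥ a) +ᵥ d with hc₂
  have hvec : c₂ -ᵥ d = (-r) • (a -ᵥ d) := by
    rw [hc₂, vadd_vsub, neg_smul, ← smul_neg, neg_vsub_eq_vsub_rev]
  have hπ2 : ∠ a d c₂ = π := by
    refine InnerProductGeometry.angle_eq_pi_iff.2 ⟨vsub_ne_zero.2 had, -r, by linarith, hvec⟩
  have hsb : Sbtw ℝ a d c₂ := angle_eq_pi_iff_sbtw.1 hπ2
  have hc₂d : c₂ ≠ d := hsb.ne_right.symm
  have hc₂L : c₂ ∉ L := by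
    intro h
    apply haL
    have hv : c₂ -ᵥ d ∈ L.direction := AffineSubspace.vsub_mem_direction h hdL
    have hv2 : a -ᵥ d ∈ L.direction := by
      have := L.direction.smul_mem (-r)⁻¹ hv
      rwa [hvec, smul_smul, inv_mul_cancel₀ (neg_ne_zero.2 (ne_of_gt hrpos)), one_smul] at this
    have := AffineSubspace.vadd_mem_of_mem_direction hv2 hdL
    rwa [vsub_vadd] at this
  have hopp₂ : L.SOppSide a c₂ := ⟨hsb.wbtw.wOppSide₁₃ hdL, haL, hc₂L⟩
  have hss : L.SSameSide c c₂ := hopp.symm.trans hopp₂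
  have hang2 : ∠ b d c₂ = ∠ b d c := by
    have h := angle_add_angle_eq_pi_of_angle_eq_pi b hπ2
    have h2 : ∠ b d a = ∠ a d b := angle_comm _ _ _
    linarith
  have hrot : ∀ x : EuclideanSpace ℝ (Fin 2), (∡ b d x).sign = -(∡ b x d).sign := by
    intro x
    rw [← oangle_swap₁₃_sign, oangle_rotate_sign]
  have hsgn : (∡ b d c).sign = (∡ b d c₂).sign := by
    rw [hrot c, hrot c₂, hss.oangle_sign_eq hbL hdL]
  have hoeq : ∡ b d c = ∡ b d c₂ := by
    rw [Real.Angle.eq_iff_abs_toReal_eq_of_sign_eq hsgn,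
      ← angle_eq_abs_oangle_toReal hbd hcd,
      ← angle_eq_abs_oangle_toReal hbd hc₂d, hang2]
  have hzero : ∡ c₂ d c = 0 := by
    have h : ∡ b d c₂ + ∡ c₂ d c = ∡ b d c := oangle_add hbd hc₂d hcd (p := d)
    rw [← hoeq] at h
    exact add_left_cancel (h.trans (add_zero (∡ b d c)).symm)
  have hangzero : ∠ c₂ d c = 0 := (oangle_eq_zero_iff_angle_eq_zero hc₂d hcd).1 hzero
  obtain ⟨-, r', hr', hcc⟩ := InnerProductGeometry.angle_eq_zero_iff.1 hangzero
  refine InnerProductGeometry.angle_eq_pi_iff.2 ⟨vsub_ne_zero.2 had, -(r' * r), by nlinarith, ?_⟩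
  rw [hcc, hvec, smul_smul]
  ring_nf


/-- Aleksandrov's Lemma (equality case). -/
theorem aleksandrov_lemma_eq
    (a b c d a' b' c' d' : EuclideanSpace ℝ (Fin 2))
    (hbd : b ≠ d)
    (hopp : (affineSpan ℝ ({b, d} : Set (EuclideanSpace ℝ (Fin 2)))).SOppSide a c)
    (h1 : dist a' b' = dist a b)
    (h2 : dist b' c' = dist b c)
    (h3 : dist a' c' = dist a d + dist d c)
    (h4 : d' ∈ segment ℝ a' c')
    (h5 : dist a' d' = dist a d) :
    (∠ a d b + ∠ b d c = Real.pi ↔ dist b' d' = dist b d) ∧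
      (∠ a d b + ∠ b d c = Real.pi →
        ∠ b' a' d' = ∠ b a d ∧ ∠ b' c' d' = ∠ b c d) := by
  have hbL : b ∈ affineSpan ℝ ({b, d} : Set (EuclideanSpace ℝ (Fin 2))) :=
    mem_affineSpan ℝ (by simp)
  have hdL : d ∈ affineSpan ℝ ({b, d} : Set (EuclideanSpace ℝ (Fin 2))) :=
    mem_affineSpan ℝ (by simp)
  have haL := hopp.left_notMem
  have hcL := hopp.right_notMem
  have had : a ≠ d := fun h => haL (h ▸ hdL)
  have hcd : c ≠ d := fun h => hcL (h ▸ hdL)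
  have hab : a ≠ b := fun h => haL (h ▸ hbL)
  have hcb : c ≠ b := fun h => hcL (h ▸ hbL)
  have hp : 0 < dist a d := dist_pos.2 had
  have hq : 0 < dist d c := dist_pos.2 (Ne.symm hcd)
  -- facts about d'
  have hw : Wbtw ℝ a' d' c' := mem_segment_iff_wbtw.1 h4
  have hseg : dist a' d' + dist d' c' = dist a' c' := dist_add_dist_eq_iff.2 hw
  have hd'c' : dist d' c' = dist d c := by linarith
  have hd'a' : d' ≠ a' := by
    intro h
    rw [h, dist_self] at h5
    linarith
  have hd'c'ne : d' ≠ c' := by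
    intro h
    rw [h, dist_self] at hd'c'
    linarith
  have hπ' : ∠ a' d' c' = π := angle_eq_pi_iff_sbtw.2 ⟨hw, hd'a', hd'c'ne⟩
  have hsup' : ∠ b' d' a' + ∠ b' d' c' = π := angle_add_angle_eq_pi_of_angle_eq_pi b' hπ'
  -- law of cosines
  have E1 := law_cos a d b
  have E2 := law_cos c d b
  have E1' := law_cos a' d' b'
  have E2' := law_cos c' d' b'
  rw [h1, h5] at E1'
  have hc'b' : dist c' b' = dist c b := by rw [dist_comm c' b', h2, dist_comm]
  have hc'd' : dist c' d' = dist c d := by rw [dist_comm c' d', hd'c', dist_comm]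
  rw [hc'b', hc'd'] at E2'
  have hcos' : Real.cos (∠ c' d' b') = -Real.cos (∠ a' d' b') := by
    have e1 : ∠ c' d' b' = ∠ b' d' c' := angle_comm _ _ _
    have e2 : ∠ a' d' b' = ∠ b' d' a' := angle_comm _ _ _
    have e3 : ∠ b' d' c' = π - ∠ b' d' a' := by linarith
    rw [e1, e2, e3, Real.cos_pi_sub]
  rw [hcos'] at E2'
  have hdc : dist c d = dist d c := dist_comm c d
  have main : ∠ a d b + ∠ b d c = Real.pi → dist b' d' = dist b d := by
    intro hsum
    have hcos : Real.cos (∠ c d b) = -Real.cos (∠ a d b) := by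
      have e1 : ∠ c d b = π - ∠ a d b := by rw [angle_comm c d b]; linarith
      rw [e1, Real.cos_pi_sub]
    rw [hcos] at E2
    have hv : (dist a d + dist c d) * (dist b d * dist b d - dist b' d' * dist b' d') = 0 := by
      linear_combination (dist c d) * E1' - (dist c d) * E1 + (dist a d) * E2' - (dist a d) * E2
    have hsq : dist b d * dist b d = dist b' d' * dist b' d' := by
      rcases mul_eq_zero.1 hv with h | h
      · exfalso; rw [hdc] at h; linarith
      · linarith
    have h0 : (dist b' d' - dist b d) * (dist b' d' + dist b d) = 0 := by
      linear_combination -hsq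
    rcases mul_eq_zero.1 h0 with h | h
    · linarith
    · have n1 : (0:ℝ) ≤ dist b' d' := dist_nonneg
      have n2 : (0:ℝ) ≤ dist b d := dist_nonneg
      linarith
  refine ⟨⟨main, ?_⟩, ?_⟩
  · intro hbd'
    rw [hbd'] at E1' E2'
    have hm : 0 < dist b d := dist_pos.2 hbd
    have ht : Real.cos (∠ a d b) = Real.cos (∠ a' d' b') := by
      have h : 2 * dist a d * dist b d * Real.cos (∠ a d b)
          = 2 * dist a d * dist b d * Real.cos (∠ a' d' b') := by linarith
      exact mul_left_cancel₀ (ne_of_gt (mul_pos (mul_pos two_pos hp) hm)) h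
    have hs : Real.cos (∠ c d b) = -Real.cos (∠ a' d' b') := by
      have h : 2 * dist c d * dist b d * Real.cos (∠ c d b)
          = 2 * dist c d * dist b d * (-Real.cos (∠ a' d' b')) := by linarith
      have hcdpos : 0 < dist c d := by rw [hdc]; exact hq
      exact mul_left_cancel₀ (ne_of_gt (mul_pos (mul_pos two_pos hcdpos) hm)) h
    have hA : ∠ a d b = ∠ a' d' b' :=
      Real.injOn_cos ⟨angle_nonneg _ _ _, angle_le_pi _ _ _⟩
        ⟨angle_nonneg _ _ _, angle_le_pi _ _ _⟩ ht
    have hC : ∠ c d b = ∠ b' d' c' := by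
      refine Real.injOn_cos ⟨angle_nonneg _ _ _, angle_le_pi _ _ _⟩
        ⟨angle_nonneg _ _ _, angle_le_pi _ _ _⟩ ?_
      rw [hs]
      have e3 : ∠ b' d' c' = π - ∠ b' d' a' := by linarith
      rw [e3, Real.cos_pi_sub, angle_comm a' d' b']
    have e4 : ∠ b d c = ∠ c d b := angle_comm _ _ _
    have e5 : ∠ a' d' b' = ∠ b' d' a' := angle_comm _ _ _
    linarith
  · intro hsum
    have hadc := aux_key a b c d hbd hopp hsum
    have hac : dist a c = dist a d + dist c d := dist_eq_add_dist_of_angle_eq_pi hadc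
    have hca' : dist c' a' = dist c a := by
      rw [dist_comm c' a', h3, dist_comm c a, hac, hdc]
    have hba' : dist b' a' = dist b a := by rw [dist_comm b' a', h1, dist_comm]
    have hba : 0 < dist b a := dist_pos.2 (Ne.symm hab)
    have hcap : 0 < dist c a := by rw [dist_comm c a, hac, hdc]; linarith
    have hbc : 0 < dist b c := dist_pos.2 (Ne.symm hcb)
    constructor
    · -- angle at a'
      have F := law_cos b a c
      have F' := law_cos b' a' c'
      rw [h2, hba', hca'] at F'
      have hcos : Real.cos (∠ b a c) = Real.cos (∠ b' a' c') := by
        have h : 2 * dist b a * dist c a * Real.cos (∠ b a c)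
            = 2 * dist b a * dist c a * Real.cos (∠ b' a' c') := by linarith
        exact mul_left_cancel₀ (ne_of_gt (mul_pos (mul_pos two_pos hba) hcap)) h
      have hA2 : ∠ b a c = ∠ b' a' c' :=
        Real.injOn_cos ⟨angle_nonneg _ _ _, angle_le_pi _ _ _⟩
          ⟨angle_nonneg _ _ _, angle_le_pi _ _ _⟩ hcos
      have e1 : ∠ b' a' d' = ∠ b' a' c' := angle_eq_angle_of_angle_eq_pi b' hπ'
      have e2 : ∠ b a d = ∠ b a c := angle_eq_angle_of_angle_eq_pi b hadc
      rw [e1, e2, hA2]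
    · -- angle at c'
      have F := law_cos b c a
      have F' := law_cos b' c' a'
      have hbc' : dist b' c' = dist b c := h2
      have hac' : dist a' c' = dist a c := by rw [h3, hac, hdc]
      rw [hba', hbc', hac'] at F'
      have hcos : Real.cos (∠ b c a) = Real.cos (∠ b' c' a') := by
        have h : 2 * dist b c * dist a c * Real.cos (∠ b c a)
            = 2 * dist b c * dist a c * Real.cos (∠ b' c' a') := by linarith
        have hacp : 0 < dist a c := by rw [dist_comm]; exact hcap
        exact mul_left_cancel₀ (ne_of_gt (mul_pos (mul_pos two_pos hbc) hacp)) h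
      have hC2 : ∠ b c a = ∠ b' c' a' :=
        Real.injOn_cos ⟨angle_nonneg _ _ _, angle_le_pi _ _ _⟩
          ⟨angle_nonneg _ _ _, angle_le_pi _ _ _⟩ hcos
      have hπc : ∠ c' d' a' = π := by rw [angle_comm]; exact hπ'
      have hπc2 : ∠ c d a = π := by rw [angle_comm]; exact hadc
      have e1 : ∠ b' c' d' = ∠ b' c' a' := angle_eq_angle_of_angle_eq_pi b' hπc
      have e2 : ∠ b c d = ∠ b c a := angle_eq_angle_of_angle_eq_pi b hπc2
      rw [e1, e2, hC2]
end

section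
/- Let p, q, s, t be points in the Euclidean plane ℝ² with s ≠ t, such that p and q lie strictly on opposite sides of the line through s and t. If ∠ p s t + ∠ t s q ≥ π, then dist p s + dist s q < dist p t + dist t q. -/
open EuclideanGeometry Real

/-- Auxiliary vector inequality: if `a` is not a multiple of `u`, all of
`a`, `b`, `u` are nonzero, and `‖b‖ * ⟪a, u⟫ + ‖a‖ * ⟪b, u⟫ ≤ 0`, then
`‖a‖ + ‖b‖ < ‖a - u‖ + ‖b - u‖`. -/
lemma aux_norm_add_norm_lt {E : Type*} [NormedAddCommGroup E] [InnerProductSpace ℝ E]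
    (a b u : E) (hu : u ≠ 0) (hb0 : b ≠ 0)
    (hnota : ∀ r : ℝ, a ≠ r • u)
    (hkey : ‖b‖ * (inner ℝ a u : ℝ) + ‖a‖ * (inner ℝ b u : ℝ) ≤ 0) :
    ‖a‖ + ‖b‖ < ‖a - u‖ + ‖b - u‖ := by
  have ha0 : a ≠ 0 := by simpa using hnota 0
  have hna : (0:ℝ) < ‖a‖ := norm_pos_iff.mpr ha0
  have hnb : (0:ℝ) < ‖b‖ := norm_pos_iff.mpr hb0
  -- strict Cauchy-Schwarz for `a - u` and `a`
  have hstrict : (inner ℝ (a - u) a : ℝ) < ‖a - u‖ * ‖a‖ := by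
    apply inner_lt_norm_mul_iff_real.mpr
    intro h
    have h2 : ‖a‖ • u = (‖a‖ - ‖a - u‖) • a := by
      calc ‖a‖ • u = ‖a‖ • a - ‖a‖ • (a - u) := by rw [smul_sub]; abel
        _ = ‖a‖ • a - ‖a - u‖ • a := by rw [h]
        _ = (‖a‖ - ‖a - u‖) • a := by rw [sub_smul]
    rcases eq_or_ne (‖a‖ - ‖a - u‖) 0 with hc | hc
    · rw [hc, zero_smul, smul_eq_zero] at h2
      rcases h2 with h2 | h2
      · exact (ne_of_gt hna) h2
      · exact hu h2
    · have hu2 : u = ((‖a‖ - ‖a - u‖) / ‖a‖) • a := by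
        rw [div_eq_inv_mul, ← smul_smul, ← h2, smul_smul,
          inv_mul_cancel₀ (ne_of_gt hna), one_smul]
      have hne : (‖a‖ - ‖a - u‖) / ‖a‖ ≠ 0 := div_ne_zero hc (ne_of_gt hna)
      exact hnota _ ((inv_smul_eq_iff₀ hne).mpr hu2).symm
  have hcs2 : (inner ℝ (b - u) b : ℝ) ≤ ‖b - u‖ * ‖b‖ := real_inner_le_norm _ _
  have hexp1 : (inner ℝ (a - u) a : ℝ) = ‖a‖ ^ 2 - (inner ℝ a u : ℝ) := by
    rw [inner_sub_left, real_inner_self_eq_norm_sq, real_inner_comm u a]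
  have hexp2 : (inner ℝ (b - u) b : ℝ) = ‖b‖ ^ 2 - (inner ℝ b u : ℝ) := by
    rw [inner_sub_left, real_inner_self_eq_norm_sq, real_inner_comm u b]
  rw [hexp1] at hstrict
  rw [hexp2] at hcs2
  nlinarith [mul_le_mul_of_nonneg_right hcs2 (le_of_lt hna),
    mul_lt_mul_of_pos_right hstrict hnb, mul_pos hna hnb, hkey,
    norm_nonneg (a - u), norm_nonneg (b - u)]

/-- If `p` and `q` lie strictly on opposite sides of the line through `s` and `t`
and the angles at `s` sum to at least `π`, then the path through `s` is strictly
shorter than the path through `t`. -/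
theorem dist_through_s_lt_of_angle_ge_pi
    (p q s t : EuclideanSpace ℝ (Fin 2)) (hst : s ≠ t)
    (hopp : (affineSpan ℝ ({s, t} : Set (EuclideanSpace ℝ (Fin 2)))).SOppSide p q)
    (hang : ∠ p s t + ∠ t s q ≥ Real.pi) :
    dist p s + dist s q < dist p t + dist t q := by
  have hp_notmem : p ∉ affineSpan ℝ ({s, t} : Set (EuclideanSpace ℝ (Fin 2))) := hopp.2.1
  have hq_notmem : q ∉ affineSpan ℝ ({s, t} : Set (EuclideanSpace ℝ (Fin 2))) := hopp.2.2
  have hu : t - s ≠ 0 := sub_ne_zero.mpr (Ne.symm hst)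
  -- `p - s` is not a multiple of `t - s`
  have hnota : ∀ r : ℝ, p - s ≠ r • (t - s) := by
    intro r h
    apply hp_notmem
    have hp : p = r • (t - s) + s := sub_eq_iff_eq_add.mp h
    have : p = AffineMap.lineMap s t r := by
      rw [AffineMap.lineMap_apply]
      simp [hp, vsub_eq_sub]
    rw [this]
    exact AffineMap.lineMap_mem_affineSpan_pair r s t
  have ha0 : p - s ≠ 0 := by simpa using hnota 0
  have hb0 : q - s ≠ 0 := by
    intro h
    apply hq_notmem
    have hqs : q = s := by
      have := sub_eq_zero.mp h
      simpa using this
    rw [hqs]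
    exact left_mem_affineSpan_pair ℝ s t
  have hna : (0:ℝ) < ‖p - s‖ := norm_pos_iff.mpr ha0
  have hnb : (0:ℝ) < ‖q - s‖ := norm_pos_iff.mpr hb0
  have hnu : (0:ℝ) < ‖t - s‖ := norm_pos_iff.mpr hu
  -- cosine comparison from the angle hypothesis
  have hcoscos : Real.cos (∠ p s t) ≤ - Real.cos (∠ t s q) := by
    have h1 : Real.pi - ∠ t s q ≤ ∠ p s t := by linarith
    have h2 : Real.cos (∠ p s t) ≤ Real.cos (Real.pi - ∠ t s q) :=
      Real.cos_le_cos_of_nonneg_of_le_pi (sub_nonneg.mpr (angle_le_pi t s q))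
        (angle_le_pi p s t) h1
    rwa [Real.cos_pi_sub] at h2
  have hcos1 : Real.cos (∠ p s t)
      = (inner ℝ (p - s) (t - s) : ℝ) / (‖p - s‖ * ‖t - s‖) := by
    rw [EuclideanGeometry.angle, InnerProductGeometry.cos_angle]
    simp [vsub_eq_sub]
  have hcos2 : Real.cos (∠ t s q)
      = (inner ℝ (q - s) (t - s) : ℝ) / (‖t - s‖ * ‖q - s‖) := by
    rw [EuclideanGeometry.angle, InnerProductGeometry.cos_angle, real_inner_comm]
    simp [vsub_eq_sub]
  rw [hcos1, hcos2] at hcoscos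
  -- combined inner product inequality
  have hkey : ‖q - s‖ * (inner ℝ (p - s) (t - s) : ℝ)
      + ‖p - s‖ * (inner ℝ (q - s) (t - s) : ℝ) ≤ 0 := by
    have hsum : (inner ℝ (p - s) (t - s) : ℝ) / (‖p - s‖ * ‖t - s‖)
        + (inner ℝ (q - s) (t - s) : ℝ) / (‖t - s‖ * ‖q - s‖) ≤ 0 := by linarith
    have heq : ‖q - s‖ * (inner ℝ (p - s) (t - s) : ℝ)
        + ‖p - s‖ * (inner ℝ (q - s) (t - s) : ℝ)
        = (‖p - s‖ * ‖q - s‖ * ‖t - s‖) *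
          ((inner ℝ (p - s) (t - s) : ℝ) / (‖p - s‖ * ‖t - s‖)
            + (inner ℝ (q - s) (t - s) : ℝ) / (‖t - s‖ * ‖q - s‖)) := by
      field_simp
    rw [heq]
    exact mul_nonpos_of_nonneg_of_nonpos (by positivity) hsum
  have hmain := aux_norm_add_norm_lt (p - s) (q - s) (t - s) hu hb0 hnota hkey
  have hd1 : dist p s = ‖p - s‖ := dist_eq_norm p s
  have hd2 : dist s q = ‖q - s‖ := by rw [dist_eq_norm, ← norm_neg]; congr 1; abel
  have hd3 : dist p t = ‖p - s - (t - s)‖ := by rw [dist_eq_norm]; congr 1; abel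
  have hd4 : dist t q = ‖q - s - (t - s)‖ := by
    rw [dist_eq_norm, ← norm_neg]; congr 1; abel
  rw [hd1, hd2, hd3, hd4]
  exact hmain
end

section
/- Let p, q, s, t be points in the Euclidean plane ℝ² with s ≠ t, such that p and q lie strictly on opposite sides of the line through s and t, and suppose ∠ p s t + ∠ t s q > π. Then s lies in the (topological) interior of the convex hull of {p, t, q}. -/
open EuclideanGeometry Real
open scoped RealInnerProductSpace

noncomputable section AuxForProof

local instance factFinrankTwo : Fact (Module.finrank ℝ (EuclideanSpace ℝ (Fin 2)) = 2) :=
  ⟨finrank_euclideanSpace_fin⟩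

private lemma aux_eq_zero_of_inner_eq (o : Orientation ℝ (EuclideanSpace ℝ (Fin 2)) (Fin 2))
    {u z : EuclideanSpace ℝ (Fin 2)} (hu : u ≠ 0)
    (h1 : ⟪u, z⟫ = 0) (h2 : o.areaForm u z = 0) : z = 0 := by
  have h2' : ⟪o.rightAngleRotation u, z⟫ = 0 := by
    rw [o.inner_rightAngleRotation_left]; exact h2
  apply ext_inner_left ℝ
  intro v
  rw [inner_zero_right]
  calc ⟪v, z⟫
      = ⟪∑ i, (o.basisRightAngleRotation u hu).repr v i • (o.basisRightAngleRotation u hu) i,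
          z⟫ := by rw [Module.Basis.sum_repr]
    _ = 0 := by
        rw [sum_inner, Fin.sum_univ_two, o.coe_basisRightAngleRotation]
        simp only [Matrix.cons_val_zero, Matrix.cons_val_one, Matrix.head_cons]
        rw [real_inner_smul_left, real_inner_smul_left, h1, h2', mul_zero, mul_zero, add_zero]

private lemma aux_exists_smul_of_areaForm_eq_zero
    (o : Orientation ℝ (EuclideanSpace ℝ (Fin 2)) (Fin 2))
    {u v : EuclideanSpace ℝ (Fin 2)} (hu : u ≠ 0) (h : o.areaForm u v = 0) :
    ∃ r : ℝ, v = r • u := by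
  refine ⟨⟪u, v⟫ / (‖u‖ ^ 2), ?_⟩
  have hz : v - (⟪u, v⟫ / ‖u‖ ^ 2) • u = 0 := by
    apply aux_eq_zero_of_inner_eq o hu
    · rw [inner_sub_right, real_inner_smul_right, real_inner_self_eq_norm_sq]
      have hn : (‖u‖ : ℝ) ^ 2 ≠ 0 := by
        have : ‖u‖ ≠ 0 := norm_ne_zero_iff.mpr hu
        positivity
      field_simp; ring
    · simp [map_sub, map_smul, o.areaForm_apply_self, h]
  exact sub_eq_zero.mp hz

end AuxForProof

set_option maxHeartbeats 1000000 in
/-- If `p` and `q` lie strictly on opposite sides of the line through `s` and `t`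
and the angles at `s` sum to more than `π`, then `s` lies in the interior of the
convex hull of `{p, t, q}`. -/
theorem mem_interior_convexHull_of_angle_gt_pi
    (p q s t : EuclideanSpace ℝ (Fin 2)) (hst : s ≠ t)
    (hopp : (affineSpan ℝ ({s, t} : Set (EuclideanSpace ℝ (Fin 2)))).SOppSide p q)
    (hang : ∠ p s t + ∠ t s q > Real.pi) :
    s ∈ interior (convexHull ℝ ({p, t, q} : Set (EuclideanSpace ℝ (Fin 2)))) := by
  classical
  haveI : Fact (Module.finrank ℝ (EuclideanSpace ℝ (Fin 2)) = 2) := ⟨finrank_euclideanSpace_fin⟩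
  set o : Orientation ℝ (EuclideanSpace ℝ (Fin 2)) (Fin 2) :=
    (EuclideanSpace.basisFun (Fin 2) ℝ).toBasis.orientation with ho
  set u : EuclideanSpace ℝ (Fin 2) := t - s with hu_def
  set v : EuclideanSpace ℝ (Fin 2) := p - s with hv_def
  set w : EuclideanSpace ℝ (Fin 2) := q - s with hw_def
  have hu : u ≠ 0 := sub_ne_zero.mpr hst.symm
  have hsmem : s ∈ affineSpan ℝ ({s, t} : Set (EuclideanSpace ℝ (Fin 2))) :=
    left_mem_affineSpan_pair ℝ s t
  obtain ⟨hWopp, hpL, hqL⟩ := hopp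
  have hmemL : ∀ x : EuclideanSpace ℝ (Fin 2), (∃ r : ℝ, x - s = r • u) →
      x ∈ affineSpan ℝ ({s, t} : Set (EuclideanSpace ℝ (Fin 2)))  := by
    rintro x ⟨r, hr⟩
    have hx : (x - s) +ᵥ s ∈ affineSpan ℝ ({s, t} : Set (EuclideanSpace ℝ (Fin 2))) := by
      refine vadd_left_mem_affineSpan_pair.mpr ⟨r, ?_⟩
      rw [vsub_eq_sub, ← hu_def, ← hr]
    simpa using hx
  have hB : o.areaForm u v ≠ 0 := by
    intro h
    obtain ⟨r, hr⟩ := aux_exists_smul_of_areaForm_eq_zero o hu h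
    exact hpL (hmemL p ⟨r, by rw [← hv_def, hr]⟩)
  have hD : o.areaForm u w ≠ 0 := by
    intro h
    obtain ⟨r, hr⟩ := aux_exists_smul_of_areaForm_eq_zero o hu h
    exact hqL (hmemL q ⟨r, by rw [← hw_def, hr]⟩)
  -- opposite sides give opposite signs
  have hBD : o.areaForm u v * o.areaForm u w < 0 := by
    rw [AffineSubspace.wOppSide_iff_exists_left hsmem] at hWopp
    rcases hWopp with hp' | ⟨p₂, hp₂, hray⟩
    · exact absurd hp' hpL
    have hp₂' : ∃ r : ℝ, r • (t -ᵥ s) = p₂ -ᵥ s := by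
      rw [← vadd_left_mem_affineSpan_pair]
      simpa using hp₂
    obtain ⟨r, hr⟩ := hp₂'
    have hv0 : p -ᵥ s ≠ 0 := by
      intro h
      rw [vsub_eq_zero_iff_eq] at h
      exact hpL (h ▸ hsmem)
    have hw0 : p₂ -ᵥ q ≠ 0 := by
      intro h
      rw [vsub_eq_zero_iff_eq] at h
      exact hqL (h ▸ hp₂)
    obtain ⟨a, b, ha, hb, hab⟩ := hray.exists_pos hv0 hw0
    have h₂ : p₂ -ᵥ q = r • u - w := by
      have h1 : p₂ -ᵥ s = r • u := by rw [← hr, vsub_eq_sub, ← hu_def]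
      rw [vsub_eq_sub] at h1 ⊢
      rw [hw_def, ← h1]
      abel
    have key : a * o.areaForm u v = -(b * o.areaForm u w) := by
      have h3 := congrArg (fun z => o.areaForm u z) hab
      rw [h₂] at h3
      simp only [map_smul, map_sub, smul_eq_mul, o.areaForm_apply_self, mul_zero] at h3
      rw [show p -ᵥ s = v from rfl] at h3
      linarith [h3]
    have hD2 : 0 < o.areaForm u w * o.areaForm u w := mul_self_pos.mpr hD
    have h5 := congrArg (fun x => x * o.areaForm u w) key
    simp only [neg_mul] at h5
    nlinarith [h5, ha, hb, hD2, mul_pos hb hD2]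
  set A : ℝ := ⟪u, v⟫ with hA_def
  set B : ℝ := o.areaForm u v with hB_def
  set C : ℝ := ⟪u, w⟫ with hC_def
  set D : ℝ := o.areaForm u w with hD_def
  have hv0 : v ≠ 0 := fun h => hB (by simp [hB_def, h])
  have hw0 : w ≠ 0 := fun h => hD (by simp [hD_def, h])
  have hun : 0 < ‖u‖ := norm_pos_iff.mpr hu
  have hvn : 0 < ‖v‖ := norm_pos_iff.mpr hv0
  have hwn : 0 < ‖w‖ := norm_pos_iff.mpr hw0
  have habs : ∀ x y : EuclideanSpace ℝ (Fin 2),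
      Real.sin (InnerProductGeometry.angle x y) * (‖x‖ * ‖y‖) = |o.areaForm x y| := by
    intro x y
    rw [InnerProductGeometry.sin_angle_mul_norm_mul_norm, ← Real.sqrt_sq_eq_abs]
    congr 1
    rw [real_inner_self_eq_norm_mul_norm, real_inner_self_eq_norm_mul_norm]
    nlinarith [o.inner_sq_add_areaForm_sq x y]
  set θ₁ : ℝ := InnerProductGeometry.angle u v with hθ₁_def
  set θ₂ : ℝ := InnerProductGeometry.angle u w with hθ₂_def
  have hang1 : ∠ p s t = θ₁ := by
    rw [hθ₁_def, InnerProductGeometry.angle_comm]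
    rfl
  have hang2 : ∠ t s q = θ₂ := rfl
  have hBs : Real.sin θ₁ * (‖u‖ * ‖v‖) = |B| := habs u v
  have hDs : Real.sin θ₂ * (‖u‖ * ‖w‖) = |D| := habs u w
  have hAs : Real.cos θ₁ * (‖u‖ * ‖v‖) = A := InnerProductGeometry.cos_angle_mul_norm_mul_norm u v
  have hCs : Real.cos θ₂ * (‖u‖ * ‖w‖) = C := InnerProductGeometry.cos_angle_mul_norm_mul_norm u w
  have hsin1 : 0 < Real.sin θ₁ := by
    have hpos : 0 < Real.sin θ₁ * (‖u‖ * ‖v‖) := by rw [hBs]; exact abs_pos.mpr hB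
    rcases mul_pos_iff.mp hpos with ⟨h, _⟩ | ⟨_, h⟩
    · exact h
    · linarith [mul_pos hun hvn]
  have hsin2 : 0 < Real.sin θ₂ := by
    have hpos : 0 < Real.sin θ₂ * (‖u‖ * ‖w‖) := by rw [hDs]; exact abs_pos.mpr hD
    rcases mul_pos_iff.mp hpos with ⟨h, _⟩ | ⟨_, h⟩
    · exact h
    · linarith [mul_pos hun hwn]
  have hθ₁π : θ₁ < π := by
    rcases lt_or_eq_of_le (InnerProductGeometry.angle_le_pi u v) with h | h
    · exact h
    · exfalso; rw [hθ₁_def, h, Real.sin_pi] at hsin1; exact lt_irrefl 0 hsin1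
  have hθ₂π : θ₂ < π := by
    rcases lt_or_eq_of_le (InnerProductGeometry.angle_le_pi u w) with h | h
    · exact h
    · exfalso; rw [hθ₂_def, h, Real.sin_pi] at hsin2; exact lt_irrefl 0 hsin2
  have hπsum : π < θ₁ + θ₂ := by rw [hang1, hang2] at hang; linarith
  have hsinsum : Real.sin (θ₁ + θ₂) < 0 := by
    have h1 : 0 < Real.sin (θ₁ + θ₂ - π) :=
      Real.sin_pos_of_pos_of_lt_pi (by linarith) (by linarith)
    have h2 : Real.sin (θ₁ + θ₂) = -Real.sin (θ₁ + θ₂ - π) := by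
      calc Real.sin (θ₁ + θ₂) = Real.sin ((θ₁ + θ₂ - π) + π) := by ring_nf
        _ = -Real.sin (θ₁ + θ₂ - π) := Real.sin_add_pi _
    linarith
  have hkey : |D| * A + |B| * C < 0 := by
    have heq : |D| * A + |B| * C = (‖u‖ * ‖u‖ * ‖v‖ * ‖w‖) * Real.sin (θ₁ + θ₂) := by
      rw [Real.sin_add, ← hAs, ← hCs, ← hBs, ← hDs]; ring
    rw [heq]
    exact mul_neg_of_pos_of_neg (mul_pos (mul_pos (mul_pos hun hun) hvn) hwn) hsinsum
  -- the barycentric coefficients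
  set α : ℝ := |D| with hα_def
  set γ : ℝ := |B| with hγ_def
  set β : ℝ := -(α * A + γ * C) / (‖u‖ * ‖u‖) with hβ_def
  have hα : 0 < α := abs_pos.mpr hD
  have hγ : 0 < γ := abs_pos.mpr hB
  have hβ : 0 < β := div_pos (by linarith) (mul_pos hun hun)
  have hcomb : α • v + β • u + γ • w = 0 := by
    apply aux_eq_zero_of_inner_eq o hu
    · rw [inner_add_right, inner_add_right, real_inner_smul_right, real_inner_smul_right,
        real_inner_smul_right, real_inner_self_eq_norm_mul_norm]
      have hmul : β * (‖u‖ * ‖u‖) = -(α * A + γ * C) :=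
        div_mul_cancel₀ _ (ne_of_gt (mul_pos hun hun))
      rw [← hA_def, ← hC_def]
      linarith [hmul]
    · rw [map_add, map_add, map_smul, map_smul, map_smul, o.areaForm_apply_self]
      rw [← hB_def, ← hD_def]
      simp only [smul_eq_mul, mul_zero, add_zero]
      rcases lt_or_gt_of_ne hB with hBneg | hBpos
      · have hDpos : 0 < D := by nlinarith [hBD]
        rw [hα_def, hγ_def, abs_of_pos hDpos, abs_of_neg hBneg]; ring
      · have hDneg : D < 0 := by nlinarith [hBD]
        rw [hα_def, hγ_def, abs_of_neg hDneg, abs_of_pos hBpos]; ring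
  set SS : ℝ := α + β + γ with hSS_def
  have hSS : 0 < SS := by positivity
  have hs : (α / SS) • p + (β / SS) • t + (γ / SS) • q = s := by
    have h1 : α • p + β • t + γ • q = SS • s := by
      rw [hu_def, hv_def, hw_def] at hcomb
      rw [hSS_def]
      linear_combination (norm := module) hcomb
    have h2 : SS • ((α / SS) • p + (β / SS) • t + (γ / SS) • q) = SS • s := by
      rw [smul_add, smul_add, smul_smul, smul_smul, smul_smul,
        mul_div_cancel₀ _ hSS.ne', mul_div_cancel₀ _ hSS.ne', mul_div_cancel₀ _ hSS.ne', h1]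
    exact smul_right_injective _ hSS.ne' h2
  -- p, t, q are not collinear
  have hcol : ¬ Collinear ℝ ({p, t, q} : Set (EuclideanSpace ℝ (Fin 2))) := by
    intro hc
    rw [collinear_iff_of_mem (Set.mem_insert p _)] at hc
    obtain ⟨z, hz⟩ := hc
    obtain ⟨r₁, hr₁⟩ := hz t (by simp)
    obtain ⟨r₂, hr₂⟩ := hz q (by simp)
    have hu' : u = v + r₁ • z := by
      rw [hu_def, hv_def, hr₁, vadd_eq_add]; abel
    have hw' : w = v + r₂ • z := by
      rw [hw_def, hv_def, hr₂, vadd_eq_add]; abel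
    have hv' : SS • v = (-(β * r₁ + γ * r₂)) • z := by
      rw [hu', hw'] at hcomb
      rw [hSS_def]
      linear_combination (norm := module) hcomb
    have hvz : v = (SS⁻¹ * -(β * r₁ + γ * r₂)) • z := by
      have h3 := congrArg (fun x => (SS : ℝ)⁻¹ • x) hv'
      simpa [smul_smul, inv_mul_cancel₀ hSS.ne'] using h3
    have huz : u = (SS⁻¹ * -(β * r₁ + γ * r₂) + r₁) • z := by
      rw [hu', hvz, add_smul]
    apply hB
    rw [hB_def, huz, hvz]
    simp [map_smul, o.areaForm_apply_self]
  have haff : AffineIndependent ℝ ![p, t, q] :=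
    affineIndependent_iff_not_collinear_set.mpr hcol
  have htot : affineSpan ℝ (Set.range ![p, t, q]) = ⊤ := by
    rw [haff.affineSpan_eq_top_iff_card_eq_finrank_add_one]
    simp [finrank_euclideanSpace_fin]
  set bb : AffineBasis (Fin 3) ℝ (EuclideanSpace ℝ (Fin 2)) := ⟨![p, t, q], haff, htot⟩ with hbb
  set W : Fin 3 → ℝ := ![α / SS, β / SS, γ / SS] with hW
  have hWsum : ∑ i, W i = 1 := by
    rw [Fin.sum_univ_three]
    show α / SS + β / SS + γ / SS = 1
    rw [← add_div, ← add_div, ← hSS_def, div_self hSS.ne']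
  have hsc : s = Finset.univ.affineCombination ℝ ![p, t, q] W := by
    rw [Finset.affineCombination_eq_linear_combination _ _ _ hWsum, Fin.sum_univ_three]
    show s = (α / SS) • p + (β / SS) • t + (γ / SS) • q
    exact hs.symm
  have hrange : Set.range ![p, t, q] = ({p, t, q} : Set (EuclideanSpace ℝ (Fin 2))) := by
    ext x
    constructor
    · rintro ⟨i, rfl⟩; fin_cases i <;> simp
    · rintro (rfl | rfl | rfl)
      exacts [⟨0, rfl⟩, ⟨1, rfl⟩, ⟨2, rfl⟩]
  have hcoord : ∀ i, 0 < bb.coord i s := by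
    intro i
    have : bb.coord i s = W i := by
      rw [hsc]
      exact bb.coord_apply_combination_of_mem (Finset.mem_univ i) hWsum
    rw [this]
    fin_cases i
    · exact div_pos hα hSS
    · exact div_pos hβ hSS
    · exact div_pos hγ hSS
  have hint := bb.interior_convexHull
  rw [← hrange, show Set.range ![p, t, q] = Set.range ⇑bb from rfl, hint]
  exact hcoord
end

section
/- Let a, b ∈ ℝ² and let p ∈ ℝ² be a point not lying on the segment [a, b]. Let (s_n) and (t_n) be sequences of points of the segment [a, b] such that dist s_n t_n → 0 as n → ∞. Then the angles ∠ s_n p t_n at the vertex p converge to 0. -/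
open Filter Topology EuclideanGeometry Real

/-- If `p` does not lie on the segment `[a, b]` and `(s_n)`, `(t_n)` are sequences
of points of `[a, b]` with `dist (s n) (t n) → 0`, then the angles at `p` tend to `0`. -/
theorem angle_tendsto_zero_of_dist_tendsto_zero
    (a b p : EuclideanSpace ℝ (Fin 2)) (hp : p ∉ segment ℝ a b)
    (s t : ℕ → EuclideanSpace ℝ (Fin 2))
    (hs : ∀ n, s n ∈ segment ℝ a b) (ht : ∀ n, t n ∈ segment ℝ a b)
    (hst : Tendsto (fun n => dist (s n) (t n)) atTop (𝓝 0)) :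
    Tendsto (fun n => ∠ (s n) p (t n)) atTop (𝓝 0) := by
  set K : Set (EuclideanSpace ℝ (Fin 2) × EuclideanSpace ℝ (Fin 2)) :=
    segment ℝ a b ×ˢ segment ℝ a b with hKdef
  have hseg : IsCompact (segment ℝ a b) := by
    rw [segment_eq_image]
    exact isCompact_Icc.image (by fun_prop)
  have hKc : IsCompact K := IsCompact.prod hseg hseg
  have hne : ∀ x ∈ segment ℝ a b, x ≠ p := fun x hx h => hp (by rwa [h] at hx)
  set f : EuclideanSpace ℝ (Fin 2) × EuclideanSpace ℝ (Fin 2) → ℝ :=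
    fun q => ∠ q.1 p q.2 with hf
  have hcont : ContinuousOn f K := by
    intro q hq
    have h1 : q.1 ≠ p := hne _ hq.1
    have h2 : q.2 ≠ p := hne _ hq.2
    have h3 : ContinuousAt
        (fun y : EuclideanSpace ℝ (Fin 2) × EuclideanSpace ℝ (Fin 2) ×
          EuclideanSpace ℝ (Fin 2) => ∠ y.1 y.2.1 y.2.2) (q.1, p, q.2) :=
      EuclideanGeometry.continuousAt_angle h1 h2
    have hg : ContinuousAt (fun q : EuclideanSpace ℝ (Fin 2) × EuclideanSpace ℝ (Fin 2) =>
        (q.1, p, q.2)) q := by fun_prop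
    exact (ContinuousAt.comp (x := q) h3 hg).continuousWithinAt
  have huc : UniformContinuousOn f K := hKc.uniformContinuousOn_of_continuous hcont
  rw [Metric.uniformContinuousOn_iff] at huc
  rw [Metric.tendsto_atTop] at hst ⊢
  intro ε hε
  obtain ⟨δ, hδ, hδ'⟩ := huc ε hε
  obtain ⟨N, hN⟩ := hst δ hδ
  refine ⟨N, fun n hn => ?_⟩
  have hmem : ((s n, t n) : EuclideanSpace ℝ (Fin 2) × EuclideanSpace ℝ (Fin 2)) ∈ K :=
    ⟨hs n, ht n⟩
  have hmem' : ((s n, s n) : EuclideanSpace ℝ (Fin 2) × EuclideanSpace ℝ (Fin 2)) ∈ K :=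
    ⟨hs n, hs n⟩
  have hd : dist ((s n, t n) : EuclideanSpace ℝ (Fin 2) × EuclideanSpace ℝ (Fin 2))
      (s n, s n) < δ := by
    have h := hN n hn
    rw [Real.dist_eq, sub_zero, abs_of_nonneg dist_nonneg] at h
    simp [Prod.dist_eq, dist_comm, h, hδ]
  have hlt := hδ' _ hmem _ hmem' hd
  have hzero : f (s n, s n) = 0 := angle_self_of_ne (hne _ (hs n))
  rw [hzero, Real.dist_eq, sub_zero, abs_of_nonneg (angle_nonneg _ _ _)] at hlt
  rw [Real.dist_eq, sub_zero, abs_of_nonneg (angle_nonneg _ _ _)]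
  exact hlt
end

section
/- Let X be a geodesic metric space satisfying the CAT(0) comparison inequality, let e be the image of a geodesic from a to b in X (a geodesic segment), and let p ∈ X be a point not lying on e. If (s_n) and (t_n) are sequences of points of e with s_n ≠ t_n for all n and dist s_n t_n → 0 as n → ∞, then the Alexandrov angles ∠_p(s_n, t_n) converge to 0. -/
open Filter Topology

/-- `γ` is a geodesic from `x` to `y`, parametrized by arclength on `[0, dist x y]`. -/
def IsGeodesicFrom {X : Type*} [MetricSpace X] (x y : X) (γ : ℝ → X) : Prop :=
  γ 0 = x ∧ γ (dist x y) = y ∧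
    ∀ s ∈ Set.Icc (0 : ℝ) (dist x y), ∀ t ∈ Set.Icc (0 : ℝ) (dist x y),
      dist (γ s) (γ t) = |s - t|

/-- A metric space is geodesic if any two points are joined by a geodesic. -/
def IsGeodesicSpace (X : Type*) [MetricSpace X] : Prop :=
  ∀ x y : X, ∃ γ : ℝ → X, IsGeodesicFrom x y γ

/-- The CAT(0) comparison inequality. -/
def SatisfiesCAT0 (X : Type*) [MetricSpace X] : Prop :=
  ∀ y z : X, y ≠ z → ∀ γ : ℝ → X, IsGeodesicFrom y z γ →
    ∀ x : X, ∀ s ∈ Set.Icc (0 : ℝ) (dist y z),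
      dist x (γ s) ^ 2 ≤ (1 - s / dist y z) * dist x y ^ 2 + (s / dist y z) * dist x z ^ 2
        - (s / dist y z) * (1 - s / dist y z) * dist y z ^ 2

/-- The comparison angle at `p` between `x` and `y`, defined by the Euclidean
law of cosines. -/
noncomputable def comparisonAngle {X : Type*} [MetricSpace X] (p x y : X) : ℝ :=
  Real.arccos ((dist p x ^ 2 + dist p y ^ 2 - dist x y ^ 2) / (2 * dist p x * dist p y))

/-- The Alexandrov angle at `p` between two geodesics `γ`, `γ'` issuing from `p`:
the limsup, as `(u, v) → (0⁺, 0⁺)`, of the comparison angles at `p` between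
`γ u` and `γ' v`. -/
noncomputable def alexandrovAngle {X : Type*} [MetricSpace X] (p : X) (γ γ' : ℝ → X) : ℝ :=
  Filter.limsup (fun uv : ℝ × ℝ => comparisonAngle p (γ uv.1) (γ' uv.2))
    ((𝓝[>] (0 : ℝ)) ×ˢ (𝓝[>] (0 : ℝ)))

lemma arccos_anti {x y : ℝ} (h : x ≤ y) : Real.arccos y ≤ Real.arccos x := by
  rw [Real.arccos_eq_pi_div_two_sub_arcsin, Real.arccos_eq_pi_div_two_sub_arcsin]
  linarith [Real.monotone_arcsin h]

lemma geodesic_dist_start {X : Type*} [MetricSpace X] {x y : X} {γ : ℝ → X}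
    (h : IsGeodesicFrom x y γ) {u : ℝ} (hu : u ∈ Set.Icc 0 (dist x y)) :
    dist x (γ u) = u := by
  have h0 : (0:ℝ) ∈ Set.Icc 0 (dist x y) := ⟨le_refl 0, dist_nonneg⟩
  have := h.2.2 0 h0 u hu
  rw [h.1] at this
  rw [this, abs_of_nonpos (by linarith [hu.1])]
  ring

lemma cat0_convex {X : Type*} [MetricSpace X] (hcat : SatisfiesCAT0 X)
    {p x y : X} (hpx : p ≠ x) (hpy : p ≠ y)
    {γ γ' : ℝ → X} (hγ : IsGeodesicFrom p x γ) (hγ' : IsGeodesicFrom p y γ')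
    {lam : ℝ} (h0 : 0 ≤ lam) (h1 : lam ≤ 1) :
    dist (γ (lam * dist p x)) (γ' (lam * dist p y)) ≤ lam * dist x y := by
  set L := dist p x with hL
  set M := dist p y with hM
  have hLpos : 0 < L := dist_pos.mpr hpx
  have hMpos : 0 < M := dist_pos.mpr hpy
  have memL : lam * L ∈ Set.Icc (0:ℝ) L := ⟨by positivity, by nlinarith⟩
  have memM : lam * M ∈ Set.Icc (0:ℝ) M := ⟨by positivity, by nlinarith⟩
  have hdivM : lam * M / M = lam := by field_simp
  have hdivL : lam * L / L = lam := by field_simp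
  have h1' := hcat p y hpy γ' hγ' x (lam * M) memM
  rw [← hM, hdivM] at h1'
  have h2' := hcat p x hpx γ hγ (γ' (lam * M)) (lam * L) memL
  rw [← hL, hdivL] at h2'
  have hd1 : dist (γ' (lam * M)) p = lam * M := by
    rw [dist_comm]; exact geodesic_dist_start hγ' memM
  rw [hd1] at h2'
  have hxp : dist x p = L := by rw [dist_comm]
  rw [hxp] at h1'
  have hxy : dist (γ' (lam * M)) x = dist x (γ' (lam * M)) := dist_comm _ _
  rw [hxy] at h2'
  have hsym : dist (γ (lam * L)) (γ' (lam * M)) = dist (γ' (lam * M)) (γ (lam * L)) :=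
    dist_comm _ _
  have hsq : dist (γ (lam * L)) (γ' (lam * M)) ^ 2 ≤ (lam * dist x y) ^ 2 := by
    rw [hsym]; nlinarith [h1', h2']
  have hnn : 0 ≤ dist (γ (lam * L)) (γ' (lam * M)) := dist_nonneg
  have hnn2 : 0 ≤ lam * dist x y := by positivity
  nlinarith [hsq, hnn, hnn2]

/-- one-sided bound on dist (γ u) (γ' v). -/
lemma dist_geo_bound {X : Type*} [MetricSpace X] (hcat : SatisfiesCAT0 X)
    {p x y : X} (hpx : p ≠ x) (hpy : p ≠ y)
    {γ γ' : ℝ → X} (hγ : IsGeodesicFrom p x γ) (hγ' : IsGeodesicFrom p y γ')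
    {u v : ℝ} (hu : u ∈ Set.Icc 0 (dist p x)) (hv : v ∈ Set.Icc 0 (dist p y)) :
    dist (γ u) (γ' v) ≤ |u - v| + 2 * dist x y * u / dist p x := by
  set L := dist p x with hL
  set M := dist p y with hM
  have hLpos : 0 < L := dist_pos.mpr hpx
  have hMpos : 0 < M := dist_pos.mpr hpy
  set lam := u / L with hlam
  have hlam0 : 0 ≤ lam := div_nonneg hu.1 hLpos.le
  have hlam1 : lam ≤ 1 := (div_le_one hLpos).mpr hu.2
  have hlamL : lam * L = u := by
    rw [hlam]; exact div_mul_cancel₀ u hLpos.ne'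
  have hc := cat0_convex hcat hpx hpy hγ hγ' hlam0 hlam1
  rw [← hL, ← hM, hlamL] at hc
  have memM : lam * M ∈ Set.Icc (0:ℝ) M := ⟨by positivity, by nlinarith⟩
  have h2 : dist (γ' (lam * M)) (γ' v) = |lam * M - v| := hγ'.2.2 _ memM v hv
  have htri : dist (γ u) (γ' v) ≤ dist (γ u) (γ' (lam * M)) + dist (γ' (lam * M)) (γ' v) :=
    dist_triangle _ _ _
  have hML : |M - L| ≤ dist x y := by
    have := abs_dist_sub_le y x p
    rw [dist_comm y p, dist_comm x p, dist_comm y x] at this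
    exact this
  have habs : |lam * M - v| ≤ |u - v| + lam * dist x y := by
    have this : |lam * M - v| ≤ |lam * M - u| + |u - v| := by
      have heq : lam * M - v = (lam * M - u) + (u - v) := by ring
      rw [heq]; exact abs_add_le _ _
    have h4 : |lam * M - u| = lam * |M - L| := by
      rw [← hlamL, ← mul_sub, abs_mul, abs_of_nonneg hlam0]
    have h5 : lam * |M - L| ≤ lam * dist x y := by
      apply mul_le_mul_of_nonneg_left hML hlam0
    calc |lam * M - v| ≤ |lam * M - u| + |u - v| := this
      _ = lam * |M - L| + |u - v| := by rw [h4]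
      _ ≤ |u - v| + lam * dist x y := by linarith
  have hfinal : dist (γ u) (γ' v) ≤ |u - v| + 2 * lam * dist x y := by
    calc dist (γ u) (γ' v) ≤ dist (γ u) (γ' (lam * M)) + |lam * M - v| := by
          rw [← h2]; exact htri
      _ ≤ lam * dist x y + (|u - v| + lam * dist x y) := by
          exact add_le_add hc habs
      _ = |u - v| + 2 * lam * dist x y := by ring
  have : 2 * lam * dist x y = 2 * dist x y * u / L := by
    rw [hlam]; ring
  linarith [hfinal, this.ge, this.le]

lemma comparison_bound {X : Type*} [MetricSpace X] (hcat : SatisfiesCAT0 X)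
    {p x y : X} (hpx : p ≠ x) (hpy : p ≠ y)
    {γ γ' : ℝ → X} (hγ : IsGeodesicFrom p x γ) (hγ' : IsGeodesicFrom p y γ')
    {d : ℝ} (hd : 0 < d) (hdx : d ≤ dist p x) (hdy : d ≤ dist p y)
    {u v : ℝ} (hu : u ∈ Set.Ioc 0 (dist p x)) (hv : v ∈ Set.Ioc 0 (dist p y)) :
    comparisonAngle p (γ u) (γ' v) ≤
      Real.arccos (1 - (2 * dist x y / d) - (2 * dist x y / d)^2 / 2) := by
  set ε := 2 * dist x y / d with hε
  have hε0 : 0 ≤ ε := by positivity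
  set L := dist p x with hL
  set M := dist p y with hM
  have hLpos : 0 < L := dist_pos.mpr hpx
  have hMpos : 0 < M := dist_pos.mpr hpy
  have hu' : u ∈ Set.Icc 0 L := ⟨hu.1.le, hu.2⟩
  have hv' : v ∈ Set.Icc 0 M := ⟨hv.1.le, hv.2⟩
  have hdu : dist p (γ u) = u := geodesic_dist_start hγ hu'
  have hdv : dist p (γ' v) = v := geodesic_dist_start hγ' hv'
  set z := dist (γ u) (γ' v) with hz
  have hz0 : 0 ≤ z := dist_nonneg
  -- bound 1
  have hb1 : z ≤ |u - v| + ε * u := by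
    have := dist_geo_bound hcat hpx hpy hγ hγ' hu' hv'
    have h6 : 2 * dist x y * u / L ≤ ε * u := by
      rw [hε]
      rw [div_mul_eq_mul_div, div_le_div_iff₀ hLpos hd]
      nlinarith [mul_le_mul_of_nonneg_left hdx
        (mul_nonneg (by positivity) hu.1.le : (0:ℝ) ≤ 2 * dist x y * u)]
    linarith
  have hb2 : z ≤ |u - v| + ε * v := by
    have := dist_geo_bound hcat hpy hpx hγ' hγ hv' hu'
    have h6 : 2 * dist y x * v / M ≤ ε * v := by
      rw [hε, dist_comm y x]
      rw [div_mul_eq_mul_div, div_le_div_iff₀ hMpos hd]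
      nlinarith [mul_le_mul_of_nonneg_left hdy
        (mul_nonneg (by positivity) hv.1.le : (0:ℝ) ≤ 2 * dist x y * v)]
    rw [dist_comm (γ' v) (γ u), abs_sub_comm v u] at this
    linarith
  set m := min u v with hm
  have hbm : z ≤ |u - v| + ε * m := by
    rcases le_total u v with h | h
    · rw [hm, min_eq_left h]; exact hb1
    · rw [hm, min_eq_right h]; exact hb2
  have hm0 : 0 ≤ m := le_min hu.1.le hv.1.le
  have hm1 : m * |u - v| ≤ u * v := by
    rcases le_total u v with h | h
    · rw [hm, min_eq_left h, abs_of_nonpos (by linarith)]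
      nlinarith [hu.1.le, hv.1.le]
    · rw [hm, min_eq_right h, abs_of_nonneg (by linarith)]
      nlinarith [hu.1.le, hv.1.le]
  have hm2 : m ^ 2 ≤ u * v := by
    have h1 : m ≤ u := min_le_left _ _
    have h2 : m ≤ v := min_le_right _ _
    nlinarith
  have hcos : 1 - ε - ε^2/2 ≤ (u^2 + v^2 - z^2) / (2 * u * v) := by
    have huv : (0:ℝ) < 2 * u * v := by
      have h1 := hu.1; have h2 := hv.1; positivity
    rw [le_div_iff₀ huv]
    have hz2 : z^2 ≤ (|u - v| + ε * m)^2 := by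
      nlinarith [abs_nonneg (u - v), mul_nonneg hε0 hm0]
    have habs2 : |u - v|^2 = (u - v)^2 := sq_abs _
    nlinarith [hz2, habs2, hm1, hm2, hε0, mul_nonneg hε0 (abs_nonneg (u - v))]
  have hunfold : comparisonAngle p (γ u) (γ' v) =
      Real.arccos ((u^2 + v^2 - z^2) / (2 * u * v)) := by
    rw [comparisonAngle, hdu, hdv, ← hz]
  rw [hunfold]
  exact arccos_anti hcos

/-- Let `e` be a geodesic segment from `a` to `b` in a geodesic CAT(0) space and
let `p ∉ e`. If `(s_n)` and `(t_n)` are sequences of points of `e` with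
`s n ≠ t n` and `dist (s n) (t n) → 0`, then the Alexandrov angles at `p` between
`s n` and `t n` converge to `0`. -/
theorem alexandrovAngle_tendsto_zero {X : Type*} [MetricSpace X]
    (hgeo : IsGeodesicSpace X) (hcat : SatisfiesCAT0 X)
    (a b : X) (γab : ℝ → X) (hγab : IsGeodesicFrom a b γab)
    (e : Set X) (he : e = γab '' Set.Icc 0 (dist a b))
    (p : X) (hp : p ∉ e)
    (s t : ℕ → X) (hs : ∀ n, s n ∈ e) (ht : ∀ n, t n ∈ e)
    (hne : ∀ n, s n ≠ t n)
    (hdist : Tendsto (fun n => dist (s n) (t n)) atTop (𝓝 0)) :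
    ∀ γ γ' : ℕ → ℝ → X,
      (∀ n, IsGeodesicFrom p (s n) (γ n)) → (∀ n, IsGeodesicFrom p (t n) (γ' n)) →
      Tendsto (fun n => alexandrovAngle p (γ n) (γ' n)) atTop (𝓝 0) := by
  intro γ γ' hγ hγ'
  -- the segment is compact, so p has positive distance to it
  have hlip : LipschitzOnWith 1 γab (Set.Icc 0 (dist a b)) := by
    apply LipschitzOnWith.of_dist_le_mul
    intro u hu v hv
    rw [hγab.2.2 u hu v hv, Real.dist_eq]
    simp
  have hcompact : IsCompact e := by
    rw [he]; exact isCompact_Icc.image_of_continuousOn hlip.continuousOn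
  have hene : e.Nonempty := ⟨a, by
    rw [he]; exact ⟨0, ⟨le_refl 0, dist_nonneg⟩, hγab.1⟩⟩
  set d := Metric.infDist p e with hdd
  have hd : 0 < d := (hcompact.isClosed.notMem_iff_infDist_pos hene).1 hp
  have hps : ∀ n, p ≠ s n := fun n h => hp (h ▸ hs n)
  have hpt : ∀ n, p ≠ t n := fun n h => hp (h ▸ ht n)
  have hds : ∀ n, d ≤ dist p (s n) := fun n => Metric.infDist_le_dist_of_mem (hs n)
  have hdt : ∀ n, d ≤ dist p (t n) := fun n => Metric.infDist_le_dist_of_mem (ht n)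
  set ε : ℕ → ℝ := fun n => 2 * dist (s n) (t n) / d with hεdef
  set g : ℕ → ℝ := fun n => Real.arccos (1 - ε n - (ε n) ^ 2 / 2) with hgdef
  haveI hFne : NeBot ((𝓝[>] (0 : ℝ)) ×ˢ (𝓝[>] (0 : ℝ))) :=
    Filter.prod_neBot.2 ⟨inferInstance, inferInstance⟩
  have hupper : ∀ n, alexandrovAngle p (γ n) (γ' n) ≤ g n := by
    intro n
    rw [alexandrovAngle]
    apply Filter.limsup_le_of_le
    · exact Filter.isCoboundedUnder_le_of_le _ (fun uv => Real.arccos_nonneg _)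
    · have h1 : Set.Ioc (0:ℝ) (dist p (s n)) ∈ 𝓝[>] (0:ℝ) :=
        Ioc_mem_nhdsGT_of_mem ⟨le_refl 0, dist_pos.mpr (hps n)⟩
      have h2 : Set.Ioc (0:ℝ) (dist p (t n)) ∈ 𝓝[>] (0:ℝ) :=
        Ioc_mem_nhdsGT_of_mem ⟨le_refl 0, dist_pos.mpr (hpt n)⟩
      filter_upwards [Filter.prod_mem_prod h1 h2] with uv huv
      exact comparison_bound hcat (hps n) (hpt n) (hγ n) (hγ' n) hd (hds n) (hdt n)
        huv.1 huv.2
  have hlower : ∀ n, 0 ≤ alexandrovAngle p (γ n) (γ' n) := by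
    intro n
    rw [alexandrovAngle]
    apply Filter.le_limsup_of_frequently_le
    · exact (Filter.Eventually.of_forall (fun uv => Real.arccos_nonneg _)).frequently
    · exact Filter.isBoundedUnder_of ⟨Real.pi, fun uv => Real.arccos_le_pi _⟩
  have hεtend : Tendsto ε atTop (𝓝 0) := by
    rw [hεdef]
    have h1 := hdist.const_mul (2:ℝ)
    have h2 := h1.div_const d
    simpa using h2
  have hgtend : Tendsto g atTop (𝓝 0) := by
    have harg : Tendsto (fun n => 1 - ε n - (ε n) ^ 2 / 2) atTop (𝓝 1) := by
      have h2 := ((tendsto_const_nhds (x := (1:ℝ))).sub hεtend).sub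
        (((hεtend.pow 2)).div_const 2)
      simpa using h2
    have := (Real.continuous_arccos.tendsto 1).comp harg
    rw [Real.arccos_one] at this
    exact this
  exact tendsto_of_tendsto_of_tendsto_of_le_of_le tendsto_const_nhds hgtend hlower hupper
end

section
/- Let a, b, p, q be points in the Euclidean plane ℝ² with a ≠ b, let L be the line through a and b, and suppose p and q lie strictly on opposite sides of L. Then for every point s ∈ L with s ≠ a, one has ∠ p s a + ∠ a s q = π if and only if s lies strictly between p and q (i.e., s is in the open segment from p to q). -/
open EuclideanGeometry Real

lemma coe_eq_pi_iff_abs {z : ℝ} (hz : |z| < 2 * Real.pi) :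
    ((z : ℝ) : Real.Angle) = (Real.pi : Real.Angle) ↔ |z| = Real.pi := by
  have hπ := Real.pi_pos
  rw [Real.Angle.angle_eq_iff_two_pi_dvd_sub]
  constructor
  · rintro ⟨k, hk⟩
    rw [abs_lt] at hz
    have hk1 : (-2 : ℝ) < (k : ℝ) := by nlinarith
    have hk2 : (k : ℝ) < 1 := by nlinarith
    have hk1' : (-2 : ℤ) < k := by exact_mod_cast hk1
    have hk2' : k < 1 := by exact_mod_cast hk2
    interval_cases k
    · push_cast at hk
      have hzv : z = -Real.pi := by linarith
      rw [hzv, abs_of_neg (by linarith)]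
      ring
    · push_cast at hk
      have hzv : z = Real.pi := by linarith
      rw [hzv, abs_of_pos hπ]
  · intro h
    rcases abs_eq (le_of_lt hπ) |>.1 h with h' | h'
    · exact ⟨0, by simp [h']⟩
    · exact ⟨-1, by rw [h']; push_cast; ring⟩

/-- Let `p` and `q` lie strictly on opposite sides of the line `L` through `a` and
`b`. Then for `s ∈ L` with `s ≠ a`, the angles at `s` towards `a` sum to `π` if and
only if `s` lies strictly between `p` and `q`. -/
theorem angle_add_angle_eq_pi_iff_sbtw
    (a b p q : EuclideanSpace ℝ (Fin 2)) (hab : a ≠ b)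
    (hopp : (affineSpan ℝ ({a, b} : Set (EuclideanSpace ℝ (Fin 2)))).SOppSide p q) :
    ∀ s ∈ affineSpan ℝ ({a, b} : Set (EuclideanSpace ℝ (Fin 2))), s ≠ a →
      (∠ p s a + ∠ a s q = Real.pi ↔ Sbtw ℝ p s q) := by
  haveI : Fact (Module.finrank ℝ (EuclideanSpace ℝ (Fin 2)) = 2) :=
    ⟨finrank_euclideanSpace_fin⟩
  haveI : Module.Oriented ℝ (EuclideanSpace ℝ (Fin 2)) (Fin 2) :=
    ⟨Module.Basis.orientation (EuclideanSpace.basisFun (Fin 2) ℝ).toBasis⟩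
  intro s hs hsa
  set L := affineSpan ℝ ({a, b} : Set (EuclideanSpace ℝ (Fin 2))) with hL
  have haL : a ∈ L := mem_affineSpan ℝ (Set.mem_insert _ _)
  have hpL : p ∉ L := hopp.2.1
  have hqL : q ∉ L := hopp.2.2
  have hps : p ≠ s := fun h => hpL (h ▸ hs)
  have hqs : q ≠ s := fun h => hqL (h ▸ hs)
  have has : a ≠ s := hsa.symm
  -- affine independence of (p, s, a) and (a, s, q)
  have hip : AffineIndependent ℝ ![p, s, a] :=
    affineIndependent_of_ne_of_notMem_of_mem_of_mem hsa hpL hs haL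
  have hiq : AffineIndependent ℝ ![a, s, q] :=
    affineIndependent_of_ne_of_mem_of_mem_of_notMem hsa.symm haL hs hqL
  have hα := oangle_ne_zero_and_ne_pi_iff_affineIndependent.2 hip
  have hβ := oangle_ne_zero_and_ne_pi_iff_affineIndependent.2 hiq
  set α := ∡ p s a with hαdef
  set β := ∡ a s q with hβdef
  -- the two oriented angles have the same (nonzero) sign
  have hsign : β.sign = α.sign := by
    have h1 : (∡ a q s).sign = -(∡ a p s).sign := hopp.oangle_sign_eq_neg haL hs
    have h2 : α.sign = (∡ a p s).sign := by
      rw [hαdef, ← oangle_rotate_sign a p s]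
    have h3 : β.sign = -(∡ a q s).sign := by
      rw [hβdef, ← oangle_rotate_sign a s q, ← oangle_swap₁₃_sign a q s]
    rw [h3, h1, h2, neg_neg]
  set x := α.toReal with hxdef
  set y := β.toReal with hydef
  have hxpi : |x| < Real.pi :=
    abs_lt.2 ⟨Real.Angle.neg_pi_lt_toReal α,
      lt_of_le_of_ne (Real.Angle.toReal_le_pi α)
        (fun h => hα.2 (Real.Angle.toReal_eq_pi_iff.1 h))⟩
  have hypi : |y| < Real.pi :=
    abs_lt.2 ⟨Real.Angle.neg_pi_lt_toReal β,
      lt_of_le_of_ne (Real.Angle.toReal_le_pi β)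
        (fun h => hβ.2 (Real.Angle.toReal_eq_pi_iff.1 h))⟩
  -- signs of toReal
  have hsx : SignType.sign x = α.sign := Real.Angle.sign_toReal hα.2
  have hsy : SignType.sign y = β.sign := Real.Angle.sign_toReal hβ.2
  have hx0 : x ≠ 0 := by
    intro h
    exact hα.1 (by rw [← Real.Angle.toReal_eq_zero_iff, ← hxdef, h])
  have hy0 : y ≠ 0 := by
    intro h
    exact hβ.1 (by rw [← Real.Angle.toReal_eq_zero_iff, ← hydef, h])
  have hsamesign : (0 < x ∧ 0 < y) ∨ (x < 0 ∧ y < 0) := by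
    rcases lt_trichotomy x 0 with hx | hx | hx
    · right
      refine ⟨hx, ?_⟩
      by_contra h
      have hy : 0 < y := lt_of_le_of_ne (not_lt.1 h) (Ne.symm hy0)
      have : SignType.sign x = SignType.sign y := by rw [hsx, hsy, hsign]
      rw [sign_neg hx, sign_pos hy] at this
      exact absurd this (by decide)
    · exact absurd hx hx0
    · left
      refine ⟨hx, ?_⟩
      by_contra h
      have hy : y < 0 := lt_of_le_of_ne (not_lt.1 h) hy0
      have : SignType.sign x = SignType.sign y := by rw [hsx, hsy, hsign]
      rw [sign_pos hx, sign_neg hy] at this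
      exact absurd this (by decide)
  -- angles as absolute values
  have hPA : ∠ p s a = |x| := angle_eq_abs_oangle_toReal hps has
  have hAQ : ∠ a s q = |y| := angle_eq_abs_oangle_toReal has hqs
  -- oriented angle addition
  have hadd : ∡ p s q = ((x + y : ℝ) : Real.Angle) := by
    rw [← oangle_add hps has hqs, ← hαdef, ← hβdef, ← Real.Angle.coe_toReal α,
      ← Real.Angle.coe_toReal β, ← hxdef, ← hydef, Real.Angle.coe_add]
  have habsadd : |x| + |y| = |x + y| := by
    rcases hsamesign with ⟨hx, hy⟩ | ⟨hx, hy⟩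
    · rw [abs_of_pos hx, abs_of_pos hy, abs_of_pos (by linarith)]
    · rw [abs_of_neg hx, abs_of_neg hy, abs_of_neg (by linarith)]
      ring
  have hzlt : |x + y| < 2 * Real.pi := by
    calc |x + y| ≤ |x| + |y| := abs_add_le x y
      _ < 2 * Real.pi := by linarith
  rw [hPA, hAQ, habsadd, ← oangle_eq_pi_iff_sbtw, hadd]
  exact (coe_eq_pi_iff_abs hzlt).symm
end
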